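/- Let r ≥ 2 and k ≥ 3 be integers. Let H be a K₃⁽²⁾-free multicolored cluster graph with color set {1,…,r} such that |L_e| ≥ 2 for every edge e, and let A ⊆ V(H) be a set of k vertices inducing a complete graph K_k in H. Then for every vertex v ∈ V(H) \ A, writing E′(v) for the set of edges of H joining v to a vertex of A, we have ∏_{e ∈ E′(v)} |L_e| ≤ max{ (r/j)^j : j ∈ {1,…,k} }. -/
import Mathlib

open SimpleGraph

/-- A multicolored cluster graph `(H, L)` is `K₃⁽²⁾`-free if for every triangle of `H`
the three lists of its edges are pairwise disjoint. -/
def ClusterK32Free {V : Type*} {r : ℕ} (H : SimpleGraph V)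
    (L : H.edgeSet → Finset (Fin r)) : Prop :=
  ∀ (a b d : V) (hab : H.Adj a b) (hbd : H.Adj b d) (had : H.Adj a d),
    Disjoint (L ⟨s(a, b), hab⟩) (L ⟨s(b, d), hbd⟩) ∧
    Disjoint (L ⟨s(a, b), hab⟩) (L ⟨s(a, d), had⟩) ∧
    Disjoint (L ⟨s(b, d), hbd⟩) (L ⟨s(a, d), had⟩)

lemma amgm {ι : Type*} (s : Finset ι) (f : ι → ℝ) (hf : ∀ i ∈ s, 0 ≤ f i)
    (C : ℝ) (hsum : ∑ i ∈ s, f i ≤ C) (hs : s.Nonempty) :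
    ∏ i ∈ s, f i ≤ (C / s.card) ^ s.card := by
  have hn : (0:ℝ) < s.card := by exact_mod_cast hs.card_pos
  have hgm := Real.geom_mean_le_arith_mean_weighted s (fun _ => 1 / s.card) f
    (fun i _ => by positivity) (by simp [Finset.sum_const, mul_comm]; field_simp) hf
  have h1 : ∑ i ∈ s, (1 / (s.card:ℝ)) * f i ≤ C / s.card := by
    rw [← Finset.mul_sum]
    rw [one_div, div_eq_inv_mul]
    gcongr
  have h2 : (∏ i ∈ s, f i ^ (1 / (s.card:ℝ))) ≤ C / s.card := hgm.trans h1
  have h3 : (∏ i ∈ s, f i ^ (1 / (s.card:ℝ))) ^ s.card = ∏ i ∈ s, f i := by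
    rw [← Finset.prod_pow]
    refine Finset.prod_congr rfl fun i hi => ?_
    rw [← Real.rpow_natCast (f i ^ (1 / (s.card:ℝ))), ← Real.rpow_mul (hf i hi)]
    rw [one_div, inv_mul_cancel₀ hn.ne', Real.rpow_one]
  calc ∏ i ∈ s, f i = (∏ i ∈ s, f i ^ (1 / (s.card:ℝ))) ^ s.card := h3.symm
    _ ≤ (C / s.card) ^ s.card := by
        apply pow_le_pow_left₀ _ h2
        exact Finset.prod_nonneg fun i hi => Real.rpow_nonneg (hf i hi) _

theorem stmt9 (r k : ℕ) (hr : 2 ≤ r) (hk : 3 ≤ k)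
    {V : Type*} (H : SimpleGraph V) [DecidableRel H.Adj]
    (L : H.edgeSet → Finset (Fin r))
    (hfree : ClusterK32Free H L)
    (hlist : ∀ e : H.edgeSet, 2 ≤ (L e).card)
    (A : Finset V) (hA : A.card = k)
    (hclique : ∀ a ∈ A, ∀ b ∈ A, a ≠ b → H.Adj a b)
    (v : V) (hv : v ∉ A) :
    -- the product of the list sizes over the edges joining `v` to `A`
    (∏ a ∈ A.attach, if h : H.Adj v (a : V) then ((L ⟨s(v, (a : V)), h⟩).card : ℝ) else 1) ≤
      (Finset.Icc 1 k).sup' ⟨1, Finset.mem_Icc.mpr ⟨le_rfl, by omega⟩⟩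
        (fun j => ((r : ℝ) / (j : ℝ)) ^ j) := by
  classical
  set S : Finset {x // x ∈ A} := A.attach.filter (fun a => H.Adj v (a : V)) with hS
  -- the list attached to each edge from v into A
  set g : {x // x ∈ A} → Finset (Fin r) :=
    fun a => if h : H.Adj v (a : V) then L ⟨s(v, (a : V)), h⟩ else ∅ with hg
  have hprod : (∏ a ∈ A.attach, if h : H.Adj v (a : V)
      then ((L ⟨s(v, (a : V)), h⟩).card : ℝ) else 1) = ∏ a ∈ S, ((g a).card : ℝ) := by
    rw [← Finset.prod_filter_mul_prod_filter_not A.attach (fun a => H.Adj v (a : V))]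
    have h2 : ∀ a ∈ A.attach.filter (fun a : {x // x ∈ A} => ¬ H.Adj v (a : V)),
        (if h : H.Adj v (a : V) then ((L ⟨s(v, (a : V)), h⟩).card : ℝ) else 1) = 1 :=
      fun a ha => dif_neg (Finset.mem_filter.mp ha).2
    rw [Finset.prod_congr rfl h2, Finset.prod_const_one, mul_one]
    refine Finset.prod_congr rfl fun a ha => ?_
    have hadj : H.Adj v (a : V) := (Finset.mem_filter.mp ha).2
    rw [dif_pos hadj, hg]
    simp [hadj]
  -- pairwise disjointness of the lists
  have hdisj : ∀ a ∈ S, ∀ b ∈ S, a ≠ b → Disjoint (g a) (g b) := by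
    intro a ha b hb hab
    have hva : H.Adj v (a : V) := (Finset.mem_filter.mp ha).2
    have hvb : H.Adj v (b : V) := (Finset.mem_filter.mp hb).2
    have hne : (a : V) ≠ (b : V) := fun h => hab (Subtype.ext h)
    have hab' : H.Adj (a : V) (b : V) := hclique _ a.2 _ b.2 hne
    have h1 := (hfree (a : V) v (b : V) hva.symm hvb hab').1
    have e1 : (⟨s((a : V), v), hva.symm⟩ : H.edgeSet) = ⟨s(v, (a : V)), hva⟩ :=
      Subtype.ext (Sym2.eq_swap)
    rw [e1] at h1
    simpa [hg, hva, hvb] using h1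
  -- sum of list sizes is at most r
  have hsum : ∑ a ∈ S, ((g a).card : ℝ) ≤ (r : ℝ) := by
    have : ∑ a ∈ S, (g a).card ≤ r := by
      rw [← Finset.card_biUnion hdisj]
      calc (S.biUnion g).card ≤ (Finset.univ : Finset (Fin r)).card :=
            Finset.card_le_card (Finset.subset_univ _)
        _ = r := by simp
    exact_mod_cast this
  rw [hprod]
  rcases S.eq_empty_or_nonempty with hSe | hSne
  · rw [hSe, Finset.prod_empty]
    have h1 : (1 : ℕ) ∈ Finset.Icc 1 k := Finset.mem_Icc.mpr ⟨le_rfl, by omega⟩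
    calc (1 : ℝ) ≤ ((r : ℝ) / ((1:ℕ) : ℝ)) ^ (1:ℕ) := by
          simp; exact_mod_cast by omega
      _ ≤ _ := Finset.le_sup' (fun j : ℕ => ((r : ℝ) / (j : ℝ)) ^ j) h1
  · have hcard : S.card ∈ Finset.Icc 1 k := by
      refine Finset.mem_Icc.mpr ⟨hSne.card_pos, ?_⟩
      calc S.card ≤ A.attach.card := Finset.card_le_card (Finset.filter_subset _ _)
        _ = k := by rw [Finset.card_attach, hA]
    calc ∏ a ∈ S, ((g a).card : ℝ) ≤ ((r : ℝ) / (S.card : ℝ)) ^ S.card :=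
          amgm S _ (fun i _ => by positivity) _ hsum hSne
      _ ≤ _ := Finset.le_sup' (fun j : ℕ => ((r : ℝ) / (j : ℝ)) ^ j) hcard
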